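/- For every choice of real scalars (a_j)_{j=1}^N one has (1−ε)·∑_{j=1}^N |a_j| ≤ ‖∑_{j=1}^N a_j x_j‖_{L_1[0,1]} ≤ (1+ε)·∑_{j=1}^N |a_j|; that is, the basis (x_j)_{j=1}^N of X^N is (1±ε)-equivalent to the unit vector basis of ℓ_1^N. -/

import Mathlib

open MeasureTheory Set Finset

/-- The interval `I_k(i)` of width `1/(m*N)`, the `i`-th subinterval (1-based)
of `[(k-1)/N, k/N)`. -/
noncomputable def Ik (m N k i : ℕ) : Set ℝ :=
  Set.Ico (((k : ℝ) - 1) / N + ((i : ℝ) - 1) / (m * N))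
    (((k : ℝ) - 1) / N + (i : ℝ) / (m * N))

/-- The functions `x_j` of the construction: for `1 ≤ j ≤ n`,
`x_j = N·𝟙_{[(j-1)/N, j/N)}`, and for `n < j ≤ N`,
`x_j = N·∑_{k=1}^n 𝟙_{I_k(i_{k,j})} + N·𝟙_{[(j-1)/N, j/N)}`, where the indices
`i_{k,j}` are encoded (0-based) by the map `idx`. -/
noncomputable def xfun (n m N : ℕ) (idx : ℕ → Fin n → Fin m) (j : ℕ) : ℝ → ℝ :=
  fun t =>
    if j ≤ n then
      (N : ℝ) * Set.indicator (Set.Ico (((j : ℝ) - 1) / N) ((j : ℝ) / N)) (fun _ => (1 : ℝ)) t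
    else
      (N : ℝ) * ∑ k : Fin n,
          Set.indicator (Ik m N ((k : ℕ) + 1) ((idx j k : ℕ) + 1)) (fun _ => (1 : ℝ)) t
        + (N : ℝ) * Set.indicator (Set.Ico (((j : ℝ) - 1) / N) ((j : ℝ) / N)) (fun _ => (1 : ℝ)) t



lemma cover_lemma {D : ℕ} (hD : 0 < D) :
    Set.Ico (0:ℝ) 1 = ⋃ s ∈ Finset.range D, Set.Ico ((s:ℝ)/(D:ℝ)) (((s:ℝ)+1)/(D:ℝ)) := by
  have hD' : (0:ℝ) < (D:ℝ) := by exact_mod_cast hD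
  ext t
  simp only [Set.mem_iUnion, Finset.mem_range, Set.mem_Ico, exists_prop]
  constructor
  · rintro ⟨h0, h1⟩
    have h0' : (0:ℝ) ≤ t * D := by positivity
    have hfl : (0:ℤ) ≤ ⌊t * (D:ℝ)⌋ := Int.floor_nonneg.2 h0'
    have hcast : ((⌊t * (D:ℝ)⌋.toNat : ℤ) : ℝ) = ((⌊t * (D:ℝ)⌋ : ℤ) : ℝ) := by
      rw [Int.toNat_of_nonneg hfl]
    refine ⟨⌊t * (D:ℝ)⌋.toNat, ?_, ?_, ?_⟩
    · have h2 : t * (D:ℝ) < ((D:ℤ):ℝ) := by push_cast; nlinarith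
      have h3 : ⌊t * (D:ℝ)⌋ < (D:ℤ) := Int.floor_lt.2 h2
      omega
    · rw [div_le_iff₀ hD']
      calc ((⌊t * (D:ℝ)⌋.toNat : ℕ) : ℝ) = ((⌊t * (D:ℝ)⌋ : ℤ) : ℝ) := by exact_mod_cast hcast
        _ ≤ t * D := Int.floor_le _
    · rw [lt_div_iff₀ hD']
      have h4 := Int.lt_floor_add_one (t*(D:ℝ))
      rw [← Int.toNat_of_nonneg hfl] at h4
      exact_mod_cast h4
  · rintro ⟨s, hs, h1, h2⟩
    refine ⟨le_trans (by positivity) h1, lt_of_lt_of_le h2 ?_⟩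
    rw [div_le_one hD']
    have : (s:ℝ) + 1 ≤ (D:ℝ) := by exact_mod_cast hs
    linarith

lemma mem_piece {D : ℝ} (hD : 0 < D) {t : ℝ} {s : ℕ}
    (ht : t ∈ Set.Ico ((s:ℝ)/D) (((s:ℝ)+1)/D)) (A B : ℕ) :
    t ∈ Set.Ico ((A:ℝ)/D) ((B:ℝ)/D) ↔ (A ≤ s ∧ s < B) := by
  obtain ⟨h1, h2⟩ := ht
  simp only [Set.mem_Ico]
  constructor
  · rintro ⟨hA, hB⟩
    constructor
    · have hA' : (A:ℝ)/D < ((s:ℝ)+1)/D := lt_of_le_of_lt hA h2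
      rw [div_lt_div_iff_of_pos_right hD] at hA'
      have : (A:ℕ) < s + 1 := by exact_mod_cast hA'
      omega
    · have hB' : (s:ℝ)/D < (B:ℝ)/D := lt_of_le_of_lt h1 hB
      rw [div_lt_div_iff_of_pos_right hD] at hB'
      exact_mod_cast hB'
  · rintro ⟨hA, hB⟩
    constructor
    · exact le_trans (by rw [div_le_div_iff_of_pos_right hD]; exact_mod_cast hA) h1
    · refine lt_of_lt_of_le h2 ?_
      rw [div_le_div_iff_of_pos_right hD]
      have : (s:ℕ) + 1 ≤ B := hB
      exact_mod_cast this

lemma nat_cond1 {m s j : ℕ} (hm : 0 < m) (hj : 1 ≤ j) :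
    ((j-1)*m ≤ s ∧ s < j*m) ↔ s/m + 1 = j := by
  obtain ⟨j', rfl⟩ : ∃ j', j = j' + 1 := ⟨j - 1, by omega⟩
  simp only [Nat.add_sub_cancel]
  constructor
  · rintro ⟨h1, h2⟩
    rw [Nat.div_eq_of_lt_le h1 h2]
  · intro h
    have hq : s / m = j' := by omega
    have hd := Nat.div_add_mod s m
    have hr := Nat.mod_lt s hm
    constructor
    · calc j' * m = m * (s/m) := by rw [hq, Nat.mul_comm]
        _ ≤ m * (s/m) + s % m := Nat.le_add_right _ _
        _ = s := hd
    · calc s = m * (s/m) + s % m := hd.symm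
        _ < m * (s/m) + m := by omega
        _ = (j' + 1) * m := by rw [hq]; ring
  
lemma nat_div_mod {m q r : ℕ} (hm : 0 < m) (hr : r < m) :
    (q*m + r)/m = q ∧ (q*m + r) % m = r := by
  constructor
  · rw [Nat.mul_comm q m, Nat.mul_add_div hm, Nat.div_eq_of_lt hr, Nat.add_zero]
  · rw [Nat.mul_comm q m, Nat.mul_add_mod, Nat.mod_eq_of_lt hr]

lemma nat_cond2 {m s k i : ℕ} (hm : 0 < m) (hi : i < m) :
    (k*m + i ≤ s ∧ s < k*m + i + 1) ↔ (s/m = k ∧ s % m = i) := by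
  constructor
  · rintro ⟨h1, h2⟩
    have hs : s = k*m + i := by omega
    rw [hs]
    exact nat_div_mod hm hi
  · rintro ⟨h1, h2⟩
    have hd := Nat.div_add_mod s m
    have hs : s = k*m + i := by rw [← h1, ← h2, Nat.mul_comm]; omega
    omega

noncomputable def Pse (m N s : ℕ) : Set ℝ :=
  Set.Ico ((s:ℝ)/((m:ℝ)*N)) (((s:ℝ)+1)/((m:ℝ)*N))

noncomputable def Cval (n m N : ℕ) (idx : ℕ → Fin n → Fin m) (a : ℕ → ℝ) (q r : ℕ) : ℝ :=
  a (q+1) + if h : q < n then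
    ∑ j ∈ Finset.Icc (n+1) N, (if r = (idx j ⟨q, h⟩ : ℕ) then a j else 0) else 0

theorem stmt1 (n m N : ℕ) (ε : ℝ) (hn : 0 < n) (hε : 0 < ε) (hε1 : ε < 1)
    (hm : (m : ℝ) = n / ε) (hN : N = n + m ^ n)
    (idx : ℕ → Fin n → Fin m) (hidx : Set.BijOn idx (Set.Ioc n N) Set.univ)
    (a : ℕ → ℝ) :
    (1 - ε) * ∑ j ∈ Finset.Icc 1 N, |a j| ≤
        ∫ t in Set.Ico (0 : ℝ) 1, |∑ j ∈ Finset.Icc 1 N, a j * xfun n m N idx j t| ∧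
      ∫ t in Set.Ico (0 : ℝ) 1, |∑ j ∈ Finset.Icc 1 N, a j * xfun n m N idx j t| ≤
        (1 + ε) * ∑ j ∈ Finset.Icc 1 N, |a j| := by
  have hm0 : 0 < m := by
    rcases Nat.eq_zero_or_pos m with h | h
    · exfalso
      rw [h] at hm
      have hp : (0:ℝ) < (n:ℝ)/ε := div_pos (by exact_mod_cast hn) hε
      norm_num at hm
      rw [← hm] at hp
      exact lt_irrefl _ hp
    · exact h
  have hN0 : 0 < N := by rw [hN]; exact Nat.lt_of_lt_of_le hn (Nat.le_add_right _ _)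
  have hnN : n ≤ N := by rw [hN]; exact Nat.le_add_right _ _
  have hD0 : 0 < m*N := Nat.mul_pos hm0 hN0
  have hmR : (0:ℝ) < m := by exact_mod_cast hm0
  have hNR : (0:ℝ) < N := by exact_mod_cast hN0
  have hDR : (0:ℝ) < (m:ℝ)*N := by positivity
  have hmne : (m:ℝ) ≠ 0 := ne_of_gt hmR
  have hNne : (N:ℝ) ≠ 0 := ne_of_gt hNR
  have hnm : (n:ℝ) = ε * m := by rw [hm]; field_simp
  have hDcast : (((m*N : ℕ)) : ℝ) = (m:ℝ)*N := by push_cast; ring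
  have cover : Set.Ico (0:ℝ) 1 = ⋃ s ∈ Finset.range (m*N), Pse m N s := by
    rw [cover_lemma hD0]
    simp only [Pse, hDcast]
  have key : ∀ s ∈ Finset.range (m*N), ∀ t ∈ Pse m N s,
      ∑ j ∈ Finset.Icc 1 N, a j * xfun n m N idx j t
        = (N:ℝ) * Cval n m N idx a (s/m) (s%m) := by
    intro s hs t ht
    rw [Finset.mem_range] at hs
    have hqN : s/m < N := (Nat.div_lt_iff_lt_mul hm0).2 (by rwa [Nat.mul_comm] at hs)
    have hrm : s % m < m := Nat.mod_lt s hm0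
    have memb : ∀ A B : ℕ,
        (t ∈ Set.Ico ((A:ℝ)/((m:ℝ)*N)) ((B:ℝ)/((m:ℝ)*N))) ↔ (A ≤ s ∧ s < B) :=
      fun A B => mem_piece hDR ht A B
    have ind1 : ∀ j : ℕ, 1 ≤ j →
        Set.indicator (Set.Ico (((j:ℝ)-1)/N) ((j:ℝ)/N)) (fun _ => (1:ℝ)) t
          = if s/m + 1 = j then 1 else 0 := by
      intro j hj
      have e1 : (((j:ℝ))-1)/(N:ℝ) = ((((j-1)*m : ℕ)):ℝ)/((m:ℝ)*N) := by
        push_cast [hj]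
        field_simp
      have e2 : ((j:ℝ))/(N:ℝ) = (((j*m : ℕ)):ℝ)/((m:ℝ)*N) := by
        push_cast; field_simp
      rw [e1, e2, Set.indicator_apply]
      by_cases hc : s/m + 1 = j
      · rw [if_pos hc, if_pos ((memb _ _).2 ((nat_cond1 hm0 hj).2 hc))]
      · rw [if_neg hc, if_neg (fun hmem => hc ((nat_cond1 hm0 hj).1 ((memb _ _).1 hmem)))]
    have ind2 : ∀ (k : Fin n) (i : ℕ), i < m →
        Set.indicator (Ik m N ((k:ℕ)+1) (i+1)) (fun _ => (1:ℝ)) t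
          = if (s/m = (k:ℕ) ∧ s % m = i) then 1 else 0 := by
      intro k i hi
      have e : Ik m N ((k:ℕ)+1) (i+1)
          = Set.Ico (((((k:ℕ)*m + i) : ℕ):ℝ)/((m:ℝ)*N))
              (((((k:ℕ)*m + i + 1) : ℕ):ℝ)/((m:ℝ)*N)) := by
        unfold Ik
        refine congrArg₂ Set.Ico ?_ ?_ <;> push_cast <;> field_simp <;> ring
      rw [e, Set.indicator_apply]
      by_cases hc : s/m = (k:ℕ) ∧ s % m = i
      · rw [if_pos hc, if_pos ((memb _ _).2 ((nat_cond2 hm0 hi).2 hc))]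
      · rw [if_neg hc, if_neg (fun hmem => hc ((nat_cond2 hm0 hi).1 ((memb _ _).1 hmem)))]
    by_cases hqn : s/m < n
    · have hterm : ∀ j ∈ Finset.Icc 1 N, a j * xfun n m N idx j t =
          (if j ≤ n then (if s/m + 1 = j then (N:ℝ) * a j else 0)
            else (if s % m = (idx j ⟨s/m, hqn⟩ : ℕ) then (N:ℝ) * a j else 0)) := by
        intro j hj
        rw [Finset.mem_Icc] at hj
        unfold xfun
        by_cases hjn : j ≤ n
        · rw [if_pos hjn, if_pos hjn, ind1 j hj.1]
          split_ifs <;> ring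
        · rw [if_neg hjn, if_neg hjn]
          have hfin : ∑ k : Fin n,
              Set.indicator (Ik m N ((k:ℕ)+1) ((idx j k : ℕ)+1)) (fun _ => (1:ℝ)) t
                = if s % m = (idx j ⟨s/m, hqn⟩ : ℕ) then 1 else 0 := by
            rw [Finset.sum_congr rfl (fun k _ => ind2 k _ (idx j k).isLt)]
            rw [Finset.sum_eq_single (⟨s/m, hqn⟩ : Fin n)]
            · simp
            · intro k _ hk
              rw [if_neg]
              rintro ⟨h1, -⟩
              exact hk (Fin.ext h1.symm)
            · intro h; exact absurd (Finset.mem_univ _) h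
          rw [hfin, ind1 j hj.1]
          have hc2 : ¬ (s/m + 1 = j) := fun hcon => hjn (hcon ▸ Nat.succ_le_of_lt hqn)
          rw [if_neg hc2]
          split_ifs <;> ring
      calc ∑ j ∈ Finset.Icc 1 N, a j * xfun n m N idx j t
          = ∑ j ∈ Finset.Icc 1 N,
            (if j ≤ n then (if s/m + 1 = j then (N:ℝ) * a j else 0)
              else (if s % m = (idx j ⟨s/m, hqn⟩ : ℕ) then (N:ℝ) * a j else 0)) :=
            Finset.sum_congr rfl hterm
        _ = ∑ j ∈ Finset.Ico 1 (n+1),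
              (if j ≤ n then (if s/m + 1 = j then (N:ℝ) * a j else 0)
                else (if s % m = (idx j ⟨s/m, hqn⟩ : ℕ) then (N:ℝ) * a j else 0))
            + ∑ j ∈ Finset.Ico (n+1) (N+1),
              (if j ≤ n then (if s/m + 1 = j then (N:ℝ) * a j else 0)
                else (if s % m = (idx j ⟨s/m, hqn⟩ : ℕ) then (N:ℝ) * a j else 0)) := by
            rw [Finset.sum_Ico_consecutive _ (by omega : 1 ≤ n+1) (by omega : n+1 ≤ N+1),
              Finset.Ico_add_one_right_eq_Icc]
        _ = (∑ j ∈ Finset.Ico 1 (n+1), (if s/m + 1 = j then (N:ℝ) * a j else 0))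
            + ∑ j ∈ Finset.Ico (n+1) (N+1),
                (N:ℝ) * (if s % m = (idx j ⟨s/m, hqn⟩ : ℕ) then a j else 0) := by
            refine congrArg₂ (· + ·) (Finset.sum_congr rfl ?_) (Finset.sum_congr rfl ?_)
            · intro j hj
              rw [Finset.mem_Ico] at hj
              rw [if_pos (by omega : j ≤ n)]
            · intro j hj
              rw [Finset.mem_Ico] at hj
              rw [if_neg (by omega : ¬ j ≤ n)]
              split_ifs <;> ring
        _ = (N:ℝ) * a (s/m + 1)
            + (N:ℝ) * ∑ j ∈ Finset.Icc (n+1) N,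
                (if s % m = (idx j ⟨s/m, hqn⟩ : ℕ) then a j else 0) := by
            rw [Finset.sum_ite_eq (Finset.Ico 1 (n+1)) (s/m+1) (fun j => (N:ℝ) * a j),
              if_pos (Finset.mem_Ico.mpr ⟨Nat.le_add_left 1 _, Nat.succ_lt_succ hqn⟩), Finset.Ico_add_one_right_eq_Icc, ← Finset.mul_sum]
        _ = (N:ℝ) * Cval n m N idx a (s/m) (s%m) := by
            unfold Cval
            rw [dif_pos hqn]
            ring
    · have hterm : ∀ j ∈ Finset.Icc 1 N, a j * xfun n m N idx j t =
          (if s/m + 1 = j then (N:ℝ) * a j else 0) := by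
        intro j hj
        rw [Finset.mem_Icc] at hj
        unfold xfun
        by_cases hjn : j ≤ n
        · rw [if_pos hjn, ind1 j hj.1]
          split_ifs <;> ring
        · rw [if_neg hjn]
          have hfin : ∑ k : Fin n,
              Set.indicator (Ik m N ((k:ℕ)+1) ((idx j k : ℕ)+1)) (fun _ => (1:ℝ)) t = 0 := by
            apply Finset.sum_eq_zero
            intro k _
            rw [ind2 k _ (idx j k).isLt, if_neg]
            rintro ⟨h1, -⟩
            exact hqn (h1 ▸ k.isLt)
          rw [hfin, ind1 j hj.1]
          split_ifs <;> ring
      rw [Finset.sum_congr rfl hterm,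
        Finset.sum_ite_eq (Finset.Icc 1 N) (s/m+1) (fun j => (N:ℝ) * a j),
        if_pos (Finset.mem_Icc.mpr ⟨Nat.le_add_left 1 _, Nat.succ_le_of_lt hqN⟩)]
      unfold Cval
      rw [dif_neg hqn]
      ring
  have hdisj : (↑(Finset.range (m*N)) : Set ℕ).Pairwise (Function.onFun Disjoint (Pse m N)) := by
    have hlt : ∀ u v : ℕ, u < v → Disjoint (Pse m N u) (Pse m N v) := by
      intro u v huv
      simp only [Pse]
      rw [Set.Ico_disjoint_Ico]
      refine le_trans inf_le_left (le_trans ?_ le_sup_right)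
      rw [div_le_div_iff_of_pos_right hDR]
      have : (u:ℕ) + 1 ≤ v := huv
      exact_mod_cast this
    intro u _ v _ hne
    rcases Nat.lt_or_ge u v with h | h
    · exact hlt u v h
    · exact (hlt v u (by omega)).symm
  have hinteg : ∀ s ∈ Finset.range (m*N),
      IntegrableOn (fun t => |∑ j ∈ Finset.Icc 1 N, a j * xfun n m N idx j t|) (Pse m N s) volume := by
    intro s hs
    unfold Pse
    rw [integrableOn_congr_fun
      (fun t ht => by rw [key s hs t ht] :
        Set.EqOn _ (fun _ => |(N:ℝ) * Cval n m N idx a (s/m) (s%m)|) _)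
      measurableSet_Ico]
    exact integrableOn_const measure_Ico_lt_top.ne
  have hpiece : ∀ s ∈ Finset.range (m*N),
      ∫ t in Pse m N s, |∑ j ∈ Finset.Icc 1 N, a j * xfun n m N idx j t|
        = (1/(m:ℝ)) * |Cval n m N idx a (s/m) (s%m)| := by
    intro s hs
    unfold Pse
    rw [setIntegral_congr_fun measurableSet_Ico
      (fun t ht => by rw [key s hs t ht] :
        Set.EqOn _ (fun _ => |(N:ℝ) * Cval n m N idx a (s/m) (s%m)|) _)]
    rw [setIntegral_const]
    rw [measureReal_def, Real.volume_Ico]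
    have hlen : ((s:ℝ)+1)/((m:ℝ)*N) - (s:ℝ)/((m:ℝ)*N) = 1/((m:ℝ)*N) := by
      rw [div_sub_div_same]; norm_num
    rw [hlen, ENNReal.toReal_ofReal (by positivity), smul_eq_mul, abs_mul,
      abs_of_nonneg (le_of_lt hNR)]
    field_simp
  have total : ∫ t in Set.Ico (0:ℝ) 1, |∑ j ∈ Finset.Icc 1 N, a j * xfun n m N idx j t|
      = ∑ q ∈ Finset.range N, ∑ r ∈ Finset.range m, (1/(m:ℝ)) * |Cval n m N idx a q r| := by
    rw [cover, integral_biUnion_finset (s := Pse m N) (Finset.range (m*N)) (fun s _ => measurableSet_Ico)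
      hdisj hinteg]
    rw [Finset.sum_congr rfl hpiece]
    have hre : ∑ s ∈ Finset.range (m*N), (1/(m:ℝ)) * |Cval n m N idx a (s/m) (s%m)|
        = ∑ p ∈ Finset.range N ×ˢ Finset.range m, (1/(m:ℝ)) * |Cval n m N idx a p.1 p.2| := by
      refine Finset.sum_nbij' (fun s => (s/m, s%m)) (fun p => p.1 * m + p.2) ?_ ?_ ?_ ?_ ?_
      · intro s hs
        rw [Finset.mem_range] at hs
        rw [Finset.mem_product, Finset.mem_range, Finset.mem_range]
        exact ⟨(Nat.div_lt_iff_lt_mul hm0).2 (by rwa [Nat.mul_comm] at hs), Nat.mod_lt s hm0⟩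
      · intro p hp
        rw [Finset.mem_product, Finset.mem_range, Finset.mem_range] at hp
        rw [Finset.mem_range]
        calc p.1 * m + p.2 < p.1 * m + m := by omega
          _ = (p.1 + 1) * m := by ring
          _ ≤ N * m := Nat.mul_le_mul_right m (by omega)
          _ = m * N := Nat.mul_comm _ _
      · intro s _
        show s/m * m + s % m = s
        rw [Nat.mul_comm (s/m) m]
        exact Nat.div_add_mod s m
      · intro p hp
        rw [Finset.mem_product, Finset.mem_range, Finset.mem_range] at hp
        have h := nat_div_mod (q := p.1) hm0 hp.2
        exact Prod.ext h.1 h.2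
      · intro s _; rfl
    rw [hre, Finset.sum_product]
  set S1 := ∑ j ∈ Finset.Icc 1 n, |a j| with hS1def
  set T2 := ∑ j ∈ Finset.Icc (n+1) N, |a j| with hT2def
  have hS1nn : 0 ≤ S1 := Finset.sum_nonneg fun j _ => abs_nonneg _
  have hT2nn : 0 ≤ T2 := Finset.sum_nonneg fun j _ => abs_nonneg _
  have hsplit : ∑ j ∈ Finset.Icc 1 N, |a j| = S1 + T2 := by
    rw [hS1def, hT2def, ← Finset.Ico_add_one_right_eq_Icc, ← Finset.Ico_add_one_right_eq_Icc, ← Finset.Ico_add_one_right_eq_Icc]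
    exact (Finset.sum_Ico_consecutive _ (by omega : 1 ≤ n+1) (by omega : n+1 ≤ N+1)).symm
  have houter : ∀ q ∈ Finset.Ico n N,
      ∑ r ∈ Finset.range m, (1/(m:ℝ)) * |Cval n m N idx a q r| = |a (q+1)| := by
    intro q hq
    rw [Finset.mem_Ico] at hq
    have hC : ∀ r, Cval n m N idx a q r = a (q+1) := by
      intro r; unfold Cval; rw [dif_neg (by omega), add_zero]
    rw [Finset.sum_congr rfl (fun r _ => by rw [hC r])]
    rw [Finset.sum_const, Finset.card_range, nsmul_eq_mul]
    field_simp
  have hTail : ∑ q ∈ Finset.Ico n N, |a (q+1)| = T2 := by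
    rw [hT2def, ← Finset.Ico_add_one_right_eq_Icc, Finset.sum_Ico_eq_sum_range, Finset.sum_Ico_eq_sum_range]
    have h1 : N + 1 - (n+1) = N - n := by omega
    rw [h1]
    refine Finset.sum_congr rfl fun i _ => ?_
    have h2 : n + i + 1 = n + 1 + i := by omega
    rw [h2]
  have hHead : ∑ q ∈ Finset.range n, |a (q+1)| = S1 := by
    rw [hS1def, ← Finset.Ico_add_one_right_eq_Icc, Finset.sum_Ico_eq_sum_range]
    refine Finset.sum_congr (by norm_num) fun i _ => ?_
    rw [Nat.add_comm 1 i]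
  have hU : ∀ q (h : q < n),
      ∑ r ∈ Finset.range m, ∑ j ∈ Finset.Icc (n+1) N,
        (if r = (idx j ⟨q,h⟩ : ℕ) then |a j| else 0) = T2 := by
    intro q h
    rw [Finset.sum_comm, hT2def]
    refine Finset.sum_congr rfl fun j _ => ?_
    rw [Finset.sum_ite_eq' (Finset.range m) ((idx j ⟨q,h⟩ : ℕ)) (fun _ => |a j|),
      if_pos (Finset.mem_range.2 (idx j ⟨q,h⟩).isLt)]
  have habs_ub : ∀ q (h : q < n) (r : ℕ), |Cval n m N idx a q r|
      ≤ |a (q+1)| + ∑ j ∈ Finset.Icc (n+1) N, (if r = (idx j ⟨q,h⟩ : ℕ) then |a j| else 0) := by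
    intro q h r
    unfold Cval
    rw [dif_pos h]
    refine le_trans (abs_add_le _ _) (add_le_add_right ?_ _)
    refine le_trans (Finset.abs_sum_le_sum_abs _ _) (Finset.sum_le_sum fun j _ => ?_)
    rw [apply_ite abs, abs_zero]
  have habs_lb : ∀ q (h : q < n) (r : ℕ),
      |a (q+1)| - (∑ j ∈ Finset.Icc (n+1) N, (if r = (idx j ⟨q,h⟩ : ℕ) then |a j| else 0))
        ≤ |Cval n m N idx a q r| := by
    intro q h r
    unfold Cval
    rw [dif_pos h]
    set T := ∑ j ∈ Finset.Icc (n+1) N, (if r = (idx j ⟨q,h⟩ : ℕ) then a j else 0) with hT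
    have h1 : |a (q+1)| ≤ |a (q+1) + T| + |T| := by
      have h2 := abs_add_le (a (q+1) + T) (-T)
      simpa using h2
    have h2 : |T| ≤ ∑ j ∈ Finset.Icc (n+1) N, (if r = (idx j ⟨q,h⟩ : ℕ) then |a j| else 0) := by
      refine le_trans (Finset.abs_sum_le_sum_abs _ _) (Finset.sum_le_sum fun j _ => ?_)
      rw [apply_ite abs, abs_zero]
    linarith
  have hmpos : (0:ℝ) ≤ 1/(m:ℝ) := by positivity
  have hinner_ub : ∀ q ∈ Finset.range n,
      ∑ r ∈ Finset.range m, (1/(m:ℝ)) * |Cval n m N idx a q r|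
        ≤ |a (q+1)| + (1/(m:ℝ)) * T2 := by
    intro q hq
    rw [Finset.mem_range] at hq
    calc ∑ r ∈ Finset.range m, (1/(m:ℝ)) * |Cval n m N idx a q r|
        ≤ ∑ r ∈ Finset.range m, (1/(m:ℝ)) * (|a (q+1)|
            + ∑ j ∈ Finset.Icc (n+1) N, (if r = (idx j ⟨q,hq⟩ : ℕ) then |a j| else 0)) :=
          Finset.sum_le_sum fun r _ =>
            mul_le_mul_of_nonneg_left (habs_ub q hq r) hmpos
      _ = (1/(m:ℝ)) * ((m:ℝ) * |a (q+1)| + T2) := by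
          rw [← Finset.mul_sum, Finset.sum_add_distrib, Finset.sum_const, Finset.card_range,
            nsmul_eq_mul, hU q hq]
      _ = |a (q+1)| + (1/(m:ℝ)) * T2 := by field_simp
  have hinner_lb : ∀ q ∈ Finset.range n,
      |a (q+1)| - (1/(m:ℝ)) * T2
        ≤ ∑ r ∈ Finset.range m, (1/(m:ℝ)) * |Cval n m N idx a q r| := by
    intro q hq
    rw [Finset.mem_range] at hq
    calc |a (q+1)| - (1/(m:ℝ)) * T2
        = (1/(m:ℝ)) * ((m:ℝ) * |a (q+1)| - T2) := by field_simp
      _ = ∑ r ∈ Finset.range m, (1/(m:ℝ)) * (|a (q+1)|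
            - ∑ j ∈ Finset.Icc (n+1) N, (if r = (idx j ⟨q,hq⟩ : ℕ) then |a j| else 0)) := by
          rw [← Finset.mul_sum, Finset.sum_sub_distrib, Finset.sum_const, Finset.card_range,
            nsmul_eq_mul, hU q hq]
      _ ≤ ∑ r ∈ Finset.range m, (1/(m:ℝ)) * |Cval n m N idx a q r| :=
          Finset.sum_le_sum fun r _ =>
            mul_le_mul_of_nonneg_left (habs_lb q hq r) hmpos
  have hεm : (1/(m:ℝ)) * (n:ℝ) = ε := by rw [hnm]; field_simp
  have hIntEq : ∫ t in Set.Ico (0:ℝ) 1, |∑ j ∈ Finset.Icc 1 N, a j * xfun n m N idx j t|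
      = (∑ q ∈ Finset.range n, ∑ r ∈ Finset.range m, (1/(m:ℝ)) * |Cval n m N idx a q r|)
        + T2 := by
    have hsplitN : ∑ q ∈ Finset.range N, ∑ r ∈ Finset.range m, (1/(m:ℝ)) * |Cval n m N idx a q r|
        = (∑ q ∈ Finset.range n, ∑ r ∈ Finset.range m, (1/(m:ℝ)) * |Cval n m N idx a q r|)
          + ∑ q ∈ Finset.Ico n N, ∑ r ∈ Finset.range m, (1/(m:ℝ)) * |Cval n m N idx a q r| := by
      exact (Finset.sum_range_add_sum_Ico _ hnN).symm
    rw [total, hsplitN]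
    congr 1
    rw [Finset.sum_congr rfl houter]
    exact hTail
  have hAub : ∑ q ∈ Finset.range n, ∑ r ∈ Finset.range m, (1/(m:ℝ)) * |Cval n m N idx a q r|
      ≤ S1 + ε * T2 := by
    calc ∑ q ∈ Finset.range n, ∑ r ∈ Finset.range m, (1/(m:ℝ)) * |Cval n m N idx a q r|
        ≤ ∑ q ∈ Finset.range n, (|a (q+1)| + (1/(m:ℝ)) * T2) := Finset.sum_le_sum hinner_ub
      _ = S1 + (n:ℝ) * ((1/(m:ℝ)) * T2) := by
          rw [Finset.sum_add_distrib, hHead, Finset.sum_const, Finset.card_range, nsmul_eq_mul]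
      _ = S1 + ε * T2 := by rw [← hεm]; ring
  have hAlb : S1 - ε * T2
      ≤ ∑ q ∈ Finset.range n, ∑ r ∈ Finset.range m, (1/(m:ℝ)) * |Cval n m N idx a q r| := by
    calc S1 - ε * T2
        = S1 - (n:ℝ) * ((1/(m:ℝ)) * T2) := by rw [← hεm]; ring
      _ = ∑ q ∈ Finset.range n, (|a (q+1)| - (1/(m:ℝ)) * T2) := by
          rw [Finset.sum_sub_distrib, hHead, Finset.sum_const, Finset.card_range, nsmul_eq_mul]
      _ ≤ _ := Finset.sum_le_sum hinner_lb
  constructor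
  · rw [hsplit, hIntEq]
    nlinarith [mul_nonneg hε.le hS1nn, hAlb]
  · rw [hsplit, hIntEq]
    nlinarith [mul_nonneg hε.le hS1nn, hAub]
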